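/- Let Q be the fork query over five binary relations A, B, C, D, E on a finite type: Q = {(a₁,...,a₆) : (a₁,a₂) ∈ A ∧ (a₂,a₃) ∈ B ∧ (a₃,a₄) ∈ C ∧ (a₃,a₅) ∈ D ∧ (a₃,a₆) ∈ E}. Then |Q| ≤ |B| · d_C · d_A · d_E · d_D, where d_C = max_v |{c : (v,c) ∈ C}|, d_A = max_v |{a : (a,v) ∈ A}| (max in-degree), d_E = max_v |{e : (v,e) ∈ E}|, and d_D = max_v |{d : (v,d) ∈ D}|. -/

import Mathlib

/-- Maximum out-degree of a finite binary relation: `max_v |{c : (v,c) ∈ S}|`. -/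
def maxOutDeg {α : Type*} [Fintype α] [DecidableEq α] (S : Finset (α × α)) : ℕ :=
  Finset.univ.sup (fun v => (S.filter (fun p => p.1 = v)).card)

/-- Maximum in-degree of a finite binary relation: `max_v |{a : (a,v) ∈ R}|`. -/
def maxInDeg {α : Type*} [Fintype α] [DecidableEq α] (R : Finset (α × α)) : ℕ :=
  Finset.univ.sup (fun v => (R.filter (fun p => p.2 = v)).card)

/-- For the fork query
`Q = {(a₁,…,a₆) : (a₁,a₂) ∈ A ∧ (a₂,a₃) ∈ B ∧ (a₃,a₄) ∈ C ∧ (a₃,a₅) ∈ D ∧ (a₃,a₆) ∈ E}`,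
we have `|Q| ≤ |B| · d_C · d_A · d_E · d_D` where `d_C, d_E, d_D` are max out-degrees and
`d_A` is the max in-degree of `A`. -/
theorem stmt_19 {α : Type*} [Fintype α] [DecidableEq α]
    (A B C D E : Finset (α × α)) :
    ((Finset.univ : Finset (α × α × α × α × α × α)).filter
        (fun t => (t.1, t.2.1) ∈ A ∧ (t.2.1, t.2.2.1) ∈ B ∧
          (t.2.2.1, t.2.2.2.1) ∈ C ∧ (t.2.2.1, t.2.2.2.2.1) ∈ D ∧
          (t.2.2.1, t.2.2.2.2.2) ∈ E)).card
      ≤ B.card * maxOutDeg C * maxInDeg A * maxOutDeg E * maxOutDeg D := by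
  classical
  set Q := ((Finset.univ : Finset (α × α × α × α × α × α)).filter
        (fun t => (t.1, t.2.1) ∈ A ∧ (t.2.1, t.2.2.1) ∈ B ∧
          (t.2.2.1, t.2.2.2.1) ∈ C ∧ (t.2.2.1, t.2.2.2.2.1) ∈ D ∧
          (t.2.2.1, t.2.2.2.2.2) ∈ E)) with hQ
  have hout : ∀ (S : Finset (α × α)) (v : α),
      (S.filter (fun p => p.1 = v)).card ≤ maxOutDeg S := by
    intro S v; exact Finset.le_sup (f := fun v => (S.filter (fun p => p.1 = v)).card) (Finset.mem_univ v)
  have hin : ∀ (S : Finset (α × α)) (v : α),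
      (S.filter (fun p => p.2 = v)).card ≤ maxInDeg S := by
    intro S v; exact Finset.le_sup (f := fun v => (S.filter (fun p => p.2 = v)).card) (Finset.mem_univ v)
  have hfib : ∀ p : α × α,
      (Q.filter (fun t => (t.2.1, t.2.2.1) = p)).card
        ≤ maxOutDeg C * maxInDeg A * maxOutDeg E * maxOutDeg D := by
    intro p
    set T := ((A.filter (fun q => q.2 = p.1)).image Prod.fst) ×ˢ
        (((C.filter (fun q => q.1 = p.2)).image Prod.snd) ×ˢ
        (((D.filter (fun q => q.1 = p.2)).image Prod.snd) ×ˢ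
        ((E.filter (fun q => q.1 = p.2)).image Prod.snd))) with hT
    have hcard : (Q.filter (fun t => (t.2.1, t.2.2.1) = p)).card ≤ T.card := by
      apply Finset.card_le_card_of_injOn
        (fun t => (t.1, t.2.2.2.1, t.2.2.2.2.1, t.2.2.2.2.2))
      · intro t ht
        simp only [hQ, Finset.mem_coe, Finset.mem_filter, Finset.mem_univ, true_and] at ht
        obtain ⟨⟨hA, hB, hC, hD, hE⟩, hp⟩ := ht
        have h2 : t.2.1 = p.1 := congrArg Prod.fst hp
        have h3 : t.2.2.1 = p.2 := congrArg Prod.snd hp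
        simp only [hT, Finset.mem_coe, Finset.mem_product, Finset.mem_image, Finset.mem_filter]
        refine ⟨⟨(t.1, t.2.1), ⟨?_, h2⟩, rfl⟩,
          ⟨(t.2.2.1, t.2.2.2.1), ⟨?_, h3⟩, rfl⟩,
          ⟨(t.2.2.1, t.2.2.2.2.1), ⟨?_, h3⟩, rfl⟩,
          ⟨(t.2.2.1, t.2.2.2.2.2), ⟨?_, h3⟩, rfl⟩⟩ <;> assumption
      · intro t ht t' ht' heq
        simp only [Finset.mem_coe, Finset.mem_filter] at ht ht'
        have h2 : t.2.1 = t'.2.1 := by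
          have := ht.2; have := ht'.2
          have e1 : t.2.1 = p.1 := congrArg Prod.fst ht.2
          have e2 : t'.2.1 = p.1 := congrArg Prod.fst ht'.2
          rw [e1, e2]
        have h3 : t.2.2.1 = t'.2.2.1 := by
          have e1 : t.2.2.1 = p.2 := congrArg Prod.snd ht.2
          have e2 : t'.2.2.1 = p.2 := congrArg Prod.snd ht'.2
          rw [e1, e2]
        obtain ⟨a1, a2, a3, a4, a5, a6⟩ := t
        obtain ⟨b1, b2, b3, b4, b5, b6⟩ := t'
        simp_all only [Prod.mk.injEq]
    refine hcard.trans ?_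
    simp only [hT, Finset.card_product]
    calc ((A.filter (fun q => q.2 = p.1)).image Prod.fst).card *
          (((C.filter (fun q => q.1 = p.2)).image Prod.snd).card *
          (((D.filter (fun q => q.1 = p.2)).image Prod.snd).card *
          ((E.filter (fun q => q.1 = p.2)).image Prod.snd).card))
        ≤ maxInDeg A * (maxOutDeg C * (maxOutDeg D * maxOutDeg E)) := by
          gcongr
          · exact Finset.card_image_le.trans (hin A p.1)
          · exact Finset.card_image_le.trans (hout C p.2)
          · exact Finset.card_image_le.trans (hout D p.2)
          · exact Finset.card_image_le.trans (hout E p.2)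
      _ = maxOutDeg C * maxInDeg A * maxOutDeg E * maxOutDeg D := by ring
  have hsub : Q ⊆ B.biUnion (fun p => Q.filter (fun t => (t.2.1, t.2.2.1) = p)) := by
    intro t ht
    have ht' := ht
    simp only [hQ, Finset.mem_filter, Finset.mem_univ, true_and] at ht'
    exact Finset.mem_biUnion.2 ⟨(t.2.1, t.2.2.1), ht'.2.1,
      Finset.mem_filter.2 ⟨ht, rfl⟩⟩
  calc Q.card ≤ (B.biUnion (fun p => Q.filter (fun t => (t.2.1, t.2.2.1) = p))).card :=
        Finset.card_le_card hsub
    _ ≤ ∑ p ∈ B, (Q.filter (fun t => (t.2.1, t.2.2.1) = p)).card :=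
        Finset.card_biUnion_le
    _ ≤ ∑ _p ∈ B, (maxOutDeg C * maxInDeg A * maxOutDeg E * maxOutDeg D) :=
        Finset.sum_le_sum (fun p _ => hfib p)
    _ = B.card * (maxOutDeg C * maxInDeg A * maxOutDeg E * maxOutDeg D) := by
        rw [Finset.sum_const, smul_eq_mul]
    _ = B.card * maxOutDeg C * maxInDeg A * maxOutDeg E * maxOutDeg D := by ring
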